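/- arXiv:2212.05151 — 2 statements merged into one kernel-verified Lean document; each statement's English description precedes it below -/
import Mathlib

section
/- Let θ ∈ [0,1], N ≥ 1, and let ψ be a stopping rule based on the sufficient statistic. Define c_N^N(s;θ) = g_θ^N(s)(1−ψ_N(s)) for 0 ≤ s ≤ N, and recursively for n = N−1,…,1 and 0 ≤ s ≤ n: c_n^N(s;θ) = [g_θ^n(s) + c_{n+1}^N(s;θ)·(n+1−s)/(n+1) + c_{n+1}^N(s+1;θ)·(s+1)/(n+1)]·(1−ψ_n(s)). Then 1 + c_1^N(0;θ) + c_1^N(1;θ) = E_θ min{τ_ψ, N+1} = 1 + Σ_{m=1}^N Σ_{x∈{0,1}^m} [∏_{n=1}^m (1−ψ_n(s_n(x)))] θ^{s_m(x)}(1−θ)^{m−s_m(x)}. (Proposition 4.) -/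
open scoped BigOperators

/-- binomial pmf `g_θ^n(s) = C(n,s) θ^s (1-θ)^{n-s}` -/
noncomputable def binom (θ : ℝ) (n s : ℕ) : ℝ :=
  (n.choose s : ℝ) * θ ^ s * (1 - θ) ^ (n - s)

/-- `s_m(x)`: number of successes among the first `m` coordinates of `x ∈ {0,1}^n` -/
def prefixCount {n : ℕ} (x : Fin n → Bool) (m : ℕ) : ℕ :=
  (Finset.univ.filter fun i : Fin n => i.val < m ∧ x i).card

/-- `s_n^ψ(x) = (∏_{m=1}^{n-1} (1-ψ_m(s_m(x)))) · ψ_n(s_n(x))`, for a stopping rule `ψ`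
based on the sufficient statistic -/
noncomputable def sstop (ψ : ℕ → ℕ → ℝ) (n : ℕ) (x : Fin n → Bool) : ℝ :=
  (∏ m ∈ Finset.range (n - 1), (1 - ψ (m + 1) (prefixCount x (m + 1)))) *
    ψ n (prefixCount x n)

/-- `ψ ∈ 𝒮^N`: the stopping rule is truncated at `N`, i.e.
`∏_{n=1}^N (1-ψ_n(s_n(x))) = 0` for every `x ∈ {0,1}^N`. -/
def TruncatedAt (ψ : ℕ → ℕ → ℝ) (N : ℕ) : Prop :=
  ∀ x : Fin N → Bool, ∏ n ∈ Finset.range N, (1 - ψ (n + 1) (prefixCount x (n + 1))) = 0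

/-- the backward recursion for the (truncated) expected sample size:
`c_N^N(s;θ) = g_θ^N(s)(1−ψ_N(s))` and, for `n < N`,
`c_n^N(s;θ) = [g_θ^n(s) + c_{n+1}^N(s;θ)·(n+1−s)/(n+1)
  + c_{n+1}^N(s+1;θ)·(s+1)/(n+1)]·(1−ψ_n(s))`. -/
noncomputable def crec (θ : ℝ) (ψ : ℕ → ℕ → ℝ) (N : ℕ) : ℕ → ℕ → ℝ :=
  fun n s =>
    if _h : n < N then
      (binom θ n s +
          (crec θ ψ N (n + 1) s * ((n + 1 - s : ℕ) : ℝ) / (n + 1) +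
            crec θ ψ N (n + 1) (s + 1) * ((s + 1 : ℕ) : ℝ) / (n + 1))) *
        (1 - ψ n s)
    else binom θ n s * (1 - ψ n s)
  termination_by n _s => N - n

lemma pc_eq_sum {n : ℕ} (x : Fin n → Bool) (m : ℕ) :
    prefixCount x m = ∑ i : Fin n, if i.val < m ∧ x i then 1 else 0 :=
  Finset.card_filter _ _

lemma pc_zero {n : ℕ} (x : Fin n → Bool) : prefixCount x 0 = 0 := by
  simp [prefixCount]

lemma pc_le {n : ℕ} (x : Fin n → Bool) (m : ℕ) : prefixCount x m ≤ m := by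
  have := Finset.card_le_card_of_injOn (fun i : Fin n => i.val)
    (t := Finset.range m)
    (s := Finset.univ.filter fun i : Fin n => i.val < m ∧ x i)
    (fun a ha => by simp at ha ⊢; omega)
    (Fin.val_injective.injOn)
  simpa [prefixCount] using this

lemma pc_cons {t : ℕ} (b : Bool) (y : Fin t → Bool) (k : ℕ) :
    prefixCount (Fin.cons b y) (k + 1) = (if b then 1 else 0) + prefixCount y k := by
  rw [pc_eq_sum, pc_eq_sum, Fin.sum_univ_succ]
  congr 1
  · cases b <;> simp
  · apply Finset.sum_congr rfl
    intro i _
    simp [Fin.val_succ, Nat.succ_lt_succ_iff]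

lemma sum_pi_cons {M : Type*} [AddCommMonoid M] (t : ℕ) (F : (Fin (t+1) → Bool) → M) :
    ∑ y : Fin (t+1) → Bool, F y = ∑ b : Bool, ∑ y : Fin t → Bool, F (Fin.cons b y) := by
  rw [← Equiv.sum_comp (Fin.consEquiv fun _ : Fin (t+1) => Bool) F, Fintype.sum_prod_type]
  rfl

lemma sum_fin_bool_cast {M : Type*} [AddCommMonoid M] {a b : ℕ} (h : a = b)
    (G : (Fin a → Bool) → M) :
    ∑ y : Fin a → Bool, G y = ∑ y : Fin b → Bool, G (y ∘ Fin.cast h) := by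
  subst h; simp [Function.comp]

lemma pc_comp_cast {a b : ℕ} (h : a = b) (y : Fin b → Bool) (m : ℕ) :
    prefixCount (y ∘ Fin.cast h) m = prefixCount y m := by
  rw [pc_eq_sum, pc_eq_sum]
  exact Fintype.sum_bijective (Fin.cast h) ((finCongr h).bijective) _ _ (fun i => by
    simp [Function.comp])

lemma pc_comp_cast' {a b : ℕ} (h : a = b) (y : Fin b → Bool) (m : ℕ) :
    prefixCount (fun i => y (Fin.cast h i)) m = prefixCount y m := pc_comp_cast h y m

noncomputable def pSum (θ : ℝ) (ψ : ℕ → ℕ → ℝ) (N n s : ℕ) : ℝ :=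
  ∑ m ∈ Finset.Icc n N, ∑ y : Fin (m - n) → Bool,
    (∏ k ∈ Finset.range (m - n + 1), (1 - ψ (n + k) (s + prefixCount y k))) *
      (θ ^ (s + prefixCount y (m - n)) *
        (1 - θ) ^ ((n - s) + ((m - n) - prefixCount y (m - n))))

lemma pSum_last (θ : ℝ) (ψ : ℕ → ℕ → ℝ) (N s : ℕ) :
    pSum θ ψ N N s = (1 - ψ N s) * (θ ^ s * (1 - θ) ^ (N - s)) := by
  simp [pSum, pc_zero]

lemma pSum_shift (θ : ℝ) (ψ : ℕ → ℕ → ℝ) (N n s' : ℕ) :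
    pSum θ ψ N (n + 1) s' = ∑ t ∈ Finset.range (N - n), ∑ y : Fin t → Bool,
      (∏ k ∈ Finset.range (t + 1), (1 - ψ (n + 1 + k) (s' + prefixCount y k))) *
        (θ ^ (s' + prefixCount y t) * (1 - θ) ^ ((n + 1 - s') + (t - prefixCount y t))) := by
  rw [pSum, ← Finset.Ico_add_one_right_eq_Icc, Finset.sum_Ico_eq_sum_range]
  have h1 : N + 1 - (n + 1) = N - n := by omega
  rw [h1]
  refine Finset.sum_congr rfl fun t _ => ?_
  rw [sum_fin_bool_cast (show n + 1 + t - (n + 1) = t by omega)]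
  simp only [Function.comp, pc_comp_cast, pc_comp_cast', Nat.add_sub_cancel_left]

lemma pSum_rec (θ : ℝ) (ψ : ℕ → ℕ → ℝ) (N n s : ℕ) (hs : s ≤ n) (hn : n < N) :
    pSum θ ψ N n s = (1 - ψ n s) *
      (θ ^ s * (1 - θ) ^ (n - s) + (pSum θ ψ N (n + 1) s + pSum θ ψ N (n + 1) (s + 1))) := by
  have hins : Finset.Icc n N = insert n (Finset.Icc (n + 1) N) := by
    ext m; simp; omega
  rw [pSum, hins, Finset.sum_insert (by simp)]
  have h0 : (∑ y : Fin (n - n) → Bool,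
      (∏ k ∈ Finset.range (n - n + 1), (1 - ψ (n + k) (s + prefixCount y k))) *
        (θ ^ (s + prefixCount y (n - n)) *
          (1 - θ) ^ ((n - s) + ((n - n) - prefixCount y (n - n))))) =
      (1 - ψ n s) * (θ ^ s * (1 - θ) ^ (n - s)) := by
    simp [pc_zero]
  rw [h0]
  have hrest : (∑ m ∈ Finset.Icc (n + 1) N, ∑ y : Fin (m - n) → Bool,
      (∏ k ∈ Finset.range (m - n + 1), (1 - ψ (n + k) (s + prefixCount y k))) *
        (θ ^ (s + prefixCount y (m - n)) *
          (1 - θ) ^ ((n - s) + ((m - n) - prefixCount y (m - n))))) =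
      (1 - ψ n s) * (pSum θ ψ N (n + 1) s + pSum θ ψ N (n + 1) (s + 1)) := by
    rw [← Finset.Ico_add_one_right_eq_Icc, Finset.sum_Ico_eq_sum_range,
      show N + 1 - (n + 1) = N - n from by omega, pSum_shift, pSum_shift,
      ← Finset.sum_add_distrib, Finset.mul_sum]
    refine Finset.sum_congr rfl fun t _ => ?_
    rw [sum_fin_bool_cast (show n + 1 + t - n = t + 1 by omega)]
    simp only [Function.comp, pc_comp_cast, pc_comp_cast']
    rw [sum_pi_cons, Fintype.sum_bool]
    have key : ∀ b : Bool, (∑ y : Fin t → Bool,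
        (∏ k ∈ Finset.range (t + 1 + 1),
            (1 - ψ (n + k) (s + prefixCount (Fin.cons b y) k))) *
          (θ ^ (s + prefixCount (Fin.cons b y) (t + 1)) *
            (1 - θ) ^ ((n - s) + ((t + 1) - prefixCount (Fin.cons b y) (t + 1))))) =
        (1 - ψ n s) * ∑ y : Fin t → Bool,
          (∏ k ∈ Finset.range (t + 1),
              (1 - ψ (n + 1 + k) ((s + if b then 1 else 0) + prefixCount y k))) *
            (θ ^ ((s + if b then 1 else 0) + prefixCount y t) *
              (1 - θ) ^ ((n + 1 - (s + if b then 1 else 0)) + (t - prefixCount y t))) := by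
      intro b
      rw [Finset.mul_sum]
      refine Finset.sum_congr rfl fun y _ => ?_
      rw [Finset.prod_range_succ']
      have hP : (∏ k ∈ Finset.range (t + 1),
          (1 - ψ (n + (k + 1)) (s + prefixCount (Fin.cons b y) (k + 1)))) =
          ∏ k ∈ Finset.range (t + 1),
            (1 - ψ (n + 1 + k) ((s + if b then 1 else 0) + prefixCount y k)) := by
        refine Finset.prod_congr rfl fun k _ => ?_
        rw [pc_cons, show n + (k + 1) = n + 1 + k from by omega,
          show s + ((if b then 1 else 0) + prefixCount y k)
            = s + (if b then 1 else 0) + prefixCount y k from by omega]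
      have hθ1 : s + prefixCount (Fin.cons b y) (t + 1)
          = (s + if b then 1 else 0) + prefixCount y t := by
        rw [pc_cons]; omega
      have hθ2 : (n - s) + ((t + 1) - prefixCount (Fin.cons b y) (t + 1))
          = (n + 1 - (s + if b then 1 else 0)) + (t - prefixCount y t) := by
        rw [pc_cons]
        have := pc_le y t
        cases b <;> simp <;> omega
      rw [hP, hθ1, hθ2]
      simp only [pc_zero, Nat.add_zero]
      ring
    simp only [show n + 1 + t - n = t + 1 from by omega]
    rw [key, key]
    norm_num
    ring
  rw [hrest]
  ring

lemma crec_eq_pSum (θ : ℝ) (ψ : ℕ → ℕ → ℝ) (N : ℕ) :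
    ∀ d n s, N - n = d → s ≤ n → n ≤ N →
      crec θ ψ N n s = (n.choose s : ℝ) * pSum θ ψ N n s := by
  intro d
  induction d with
  | zero =>
    intro n s hd hs hn
    have hnN : n = N := by omega
    subst hnN
    rw [crec]
    rw [dif_neg (by omega), pSum_last, binom]
    ring
  | succ d ih =>
    intro n s hd hs hn
    have hnN : n < N := by omega
    rw [crec, dif_pos hnN,
      ih (n + 1) s (by omega) (by omega) (by omega),
      ih (n + 1) (s + 1) (by omega) (by omega) (by omega),
      pSum_rec θ ψ N n s hs hnN]
    have hn1 : ((n : ℝ) + 1) ≠ 0 := by positivity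
    have e1 : ((n + 1).choose s : ℝ) * ((n + 1 - s : ℕ) : ℝ) = (n.choose s : ℝ) * ((n : ℝ) + 1) := by
      have := Nat.choose_mul_succ_eq n s
      have h2 : ((n.choose s * (n + 1) : ℕ) : ℝ) = (((n + 1).choose s * (n + 1 - s) : ℕ) : ℝ) := by
        rw [this]
      push_cast at h2
      push_cast
      linarith
    have e2 : ((n + 1).choose (s + 1) : ℝ) * ((s + 1 : ℕ) : ℝ) = (n.choose s : ℝ) * ((n : ℝ) + 1) := by
      have := Nat.add_one_mul_choose_eq n s
      have h2 : ((Nat.succ n * n.choose s : ℕ) : ℝ) = (((n + 1).choose (s + 1) * (s + 1) : ℕ) : ℝ) := by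
        rw [this]
      push_cast at h2
      push_cast
      linarith
    have E1 : ((n + 1).choose s : ℝ) * pSum θ ψ N (n + 1) s * ((n + 1 - s : ℕ) : ℝ) / ((n : ℝ) + 1)
        = (n.choose s : ℝ) * pSum θ ψ N (n + 1) s := by
      rw [div_eq_iff hn1]
      linear_combination pSum θ ψ N (n + 1) s * e1
    have E2 : ((n + 1).choose (s + 1) : ℝ) * pSum θ ψ N (n + 1) (s + 1) * ((s + 1 : ℕ) : ℝ) / ((n : ℝ) + 1)
        = (n.choose s : ℝ) * pSum θ ψ N (n + 1) (s + 1) := by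
      rw [div_eq_iff hn1]
      linear_combination pSum θ ψ N (n + 1) (s + 1) * e2
    rw [E1, E2, binom]
    ring

lemma main_sum (θ : ℝ) (ψ : ℕ → ℕ → ℝ) (N : ℕ) :
    (∑ m ∈ Finset.Icc 1 N, ∑ x : Fin m → Bool,
        (∏ n ∈ Finset.range m, (1 - ψ (n + 1) (prefixCount x (n + 1)))) *
          (θ ^ prefixCount x m * (1 - θ) ^ (m - prefixCount x m))) =
      pSum θ ψ N 1 0 + pSum θ ψ N 1 1 := by
  rw [(pSum_shift θ ψ N 0 0 : pSum θ ψ N 1 0 = _),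
      (pSum_shift θ ψ N 0 1 : pSum θ ψ N 1 1 = _),
      ← Finset.sum_add_distrib,
      ← Finset.Ico_add_one_right_eq_Icc, Finset.sum_Ico_eq_sum_range,
      show N + 1 - 1 = N - 0 from by omega]
  refine Finset.sum_congr rfl fun t _ => ?_
  rw [sum_fin_bool_cast (show 1 + t = t + 1 by omega)]
  simp only [Function.comp, pc_comp_cast, pc_comp_cast']
  rw [sum_pi_cons, Fintype.sum_bool, add_comm]
  congr 1
  · refine Finset.sum_congr rfl fun y _ => ?_
    have hle := pc_le y t
    simp only [show (1:ℕ)+t = t+1 from by omega, pc_cons]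
    norm_num
    congr 1
    · exact Finset.prod_congr rfl fun k _ => by rw [Nat.add_comm k 1]
    · rw [show t + 1 - prefixCount y t = 1 + (t - prefixCount y t) from by omega]
  · refine Finset.sum_congr rfl fun y _ => ?_
    have hle := pc_le y t
    simp only [show (1:ℕ)+t = t+1 from by omega, pc_cons]
    norm_num
    congr 1
    · exact Finset.prod_congr rfl fun k _ => by rw [Nat.add_comm k 1]
    · rw [show t + 1 - (1 + prefixCount y t) = t - prefixCount y t from by omega]


/-- **Proposition 4**: the recursion `c_n^N` computes `E_θ min{τ_ψ, N+1}`: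
`1 + c_1^N(0;θ) + c_1^N(1;θ) = E_θ min{τ_ψ, N+1}
  = 1 + Σ_{m=1}^N Σ_{x∈{0,1}^m} [∏_{n=1}^m (1−ψ_n(s_n(x)))] θ^{s_m(x)}(1−θ)^{m−s_m(x)}`,
the sum over `m` being the sum of the probabilities `P_θ(τ_ψ > m)`. -/
theorem stmt5 (θ : ℝ) (hθ : θ ∈ Set.Icc (0 : ℝ) 1)
    (N : ℕ) (hN : 1 ≤ N)
    (ψ : ℕ → ℕ → ℝ) (hψ : ∀ n s, ψ n s ∈ Set.Icc (0 : ℝ) 1) :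
    1 + crec θ ψ N 1 0 + crec θ ψ N 1 1 =
      1 + ∑ m ∈ Finset.Icc 1 N, ∑ x : Fin m → Bool,
        (∏ n ∈ Finset.range m, (1 - ψ (n + 1) (prefixCount x (n + 1)))) *
          (θ ^ prefixCount x m * (1 - θ) ^ (m - prefixCount x m)) := by
  have h0 : crec θ ψ N 1 0 = pSum θ ψ N 1 0 := by
    rw [crec_eq_pSum θ ψ N (N - 1) 1 0 (by omega) (by omega) (by omega)]; norm_num
  have h1 : crec θ ψ N 1 1 = pSum θ ψ N 1 1 := by
    rw [crec_eq_pSum θ ψ N (N - 1) 1 1 (by omega) (by omega) (by omega)]; norm_num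
  rw [h0, h1, main_sum]
  ring
end

section
/- (Truncated lower bound, Bernoulli instance of inequality (2-5).) For every sequential test ⟨ψ,φ⟩ based on the sufficient statistic with ψ ∈ 𝒮^N, the Lagrangian satisfies L(ψ,φ) := Σ_{n=1}^N Σ_{x∈{0,1}^n} s_n^ψ(x) [ n·f_{γϑ}^n(x) + Σ_{j=1}^k φ_n^j(s_n(x)) Σ_{i≠j} λ_{ij} f_{θ_i}^n(x) ] ≥ 1 + U_1^N(0) + U_1^N(1). -/
open scoped BigOperators

/-- number of successes in the sample `x` -/
def count {n : ℕ} (x : Fin n → Bool) : ℕ := (Finset.univ.filter fun i => x i).card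

/-- joint Bernoulli density `f_θ^n(x) = θ^{s_n(x)} (1-θ)^{n-s_n(x)}` -/
noncomputable def fpow (θ : ℝ) (n : ℕ) (x : Fin n → Bool) : ℝ :=
  θ ^ count x * (1 - θ) ^ (n - count x)

/-- `u_n(s) = min_{1≤j≤k} Σ_{i≠j} λ_{ij} g_{θ_i}^n(s)` -/
noncomputable def ufun (k : ℕ) (θs : Fin k → ℝ) (lam : Fin k → Fin k → ℝ)
    (n s : ℕ) : ℝ :=
  ⨅ j : Fin k, ∑ i ∈ Finset.univ.filter (· ≠ j), lam i j * binom (θs i) n s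

/-- `f_{γϑ}^n(x) = Σ_i γ_i f_{ϑ_i}^n(x)` -/
noncomputable def fmix (K : ℕ) (γ ϑ : Fin K → ℝ) (n : ℕ) (x : Fin n → Bool) : ℝ :=
  ∑ i, γ i * fpow (ϑ i) n x

/-- `g_{γϑ}^n(s) = Σ_i γ_i g_{ϑ_i}^n(s)` -/
noncomputable def gmix (K : ℕ) (γ ϑ : Fin K → ℝ) (n s : ℕ) : ℝ :=
  ∑ i, γ i * binom (ϑ i) n s

/-- the backward recursion `U_n^N`: `U_N^N = u_N` and
`U_{n}^N(s) = min{u_{n}(s), g_{γϑ}^{n}(s) + (𝒥_{n+1} U_{n+1}^N)(s)}` for `n < N`, where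
`(𝒥_{n+1} U)(s) = U(s)·(n+1-s)/(n+1) + U(s+1)·(s+1)/(n+1)`. -/
noncomputable def U (k : ℕ) (θs : Fin k → ℝ) (lam : Fin k → Fin k → ℝ)
    (K : ℕ) (γ ϑ : Fin K → ℝ) (N : ℕ) : ℕ → ℕ → ℝ :=
  fun n s =>
    if _h : n < N then
      min (ufun k θs lam n s)
        (gmix K γ ϑ n s +
          (U k θs lam K γ ϑ N (n + 1) s * ((n + 1 - s : ℕ) : ℝ) / (n + 1) +
            U k θs lam K γ ϑ N (n + 1) (s + 1) * ((s + 1 : ℕ) : ℝ) / (n + 1)))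
    else ufun k θs lam n s
  termination_by n _s => N - n

/-- the Lagrangian of a truncated test `⟨ψ,φ⟩` based on the sufficient statistic:
`L(ψ,φ) = Σ_{n=1}^N Σ_{x∈{0,1}^n} s_n^ψ(x)
  [ n·f_{γϑ}^n(x) + Σ_{j=1}^k φ_n^j(s_n(x)) Σ_{i≠j} λ_{ij} f_{θ_i}^n(x) ]`. -/
noncomputable def Lagr (k : ℕ) (θs : Fin k → ℝ) (lam : Fin k → Fin k → ℝ)
    (K : ℕ) (γ ϑ : Fin K → ℝ) (N : ℕ)
    (ψ : ℕ → ℕ → ℝ) (φ : ℕ → ℕ → Fin k → ℝ) : ℝ :=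
  ∑ n ∈ Finset.Icc 1 N, ∑ x : Fin n → Bool,
    sstop ψ n x *
      ((n : ℝ) * fmix K γ ϑ n x +
        ∑ j : Fin k, φ n (prefixCount x n) j *
          ∑ i ∈ Finset.univ.filter (· ≠ j), lam i j * fpow (θs i) n x)

-- AUX START
section AuxStmt14

open Finset

lemma count_le' {n : ℕ} (x : Fin n → Bool) : count x ≤ n := by
  classical
  simpa [count] using (Finset.card_filter_le Finset.univ fun i => x i)

lemma count_snoc' {n : ℕ} (x : Fin n → Bool) (b : Bool) :
    count (Fin.snoc x b) = count x + (if b then 1 else 0) := by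
  classical
  simp only [count, Finset.card_filter]
  rw [Fin.sum_univ_castSucc]
  simp [Fin.snoc_castSucc, Fin.snoc_last]

lemma prefixCount_snoc' {n m : ℕ} (x : Fin n → Bool) (b : Bool) (hm : m ≤ n) :
    prefixCount (Fin.snoc x b) m = prefixCount x m := by
  classical
  simp only [prefixCount, Finset.card_filter]
  rw [Fin.sum_univ_castSucc]
  have h1 : ∀ j : Fin n,
      ((Fin.castSucc j).val < m ∧ (Fin.snoc x b : Fin (n+1) → Bool) (Fin.castSucc j) = true)
        ↔ (j.val < m ∧ x j = true) := by
    intro j; rw [Fin.snoc_castSucc]; simp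
  have h2 : ¬ ((Fin.last n).val < m ∧ (Fin.snoc x b : Fin (n+1) → Bool) (Fin.last n) = true) := by
    intro h; exact absurd h.1 (by simp [Fin.val_last]; omega)
  simp only [h2, if_false, add_zero]
  exact Finset.sum_congr rfl fun j _ => by simp [h1 j]

lemma prefixCount_self' {n : ℕ} (x : Fin n → Bool) : prefixCount x n = count x := by
  classical
  unfold prefixCount count
  congr 1
  apply Finset.filter_congr
  intro i _
  simp [i.isLt]

lemma fpow_nonneg' {θ : ℝ} (hθ : θ ∈ Set.Icc (0:ℝ) 1) (n : ℕ) (x : Fin n → Bool) :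
    0 ≤ fpow θ n x :=
  mul_nonneg (pow_nonneg hθ.1 _) (pow_nonneg (by linarith [hθ.2]) _)

lemma fpow_snoc_false' {θ : ℝ} {n : ℕ} (x : Fin n → Bool) :
    fpow θ (n+1) (Fin.snoc x false) = (1-θ) * fpow θ n x := by
  have h := count_le' x
  simp only [fpow, count_snoc']
  norm_num
  rw [show n + 1 - count x = (n - count x) + 1 from by omega]
  ring

lemma fpow_snoc_true' {θ : ℝ} {n : ℕ} (x : Fin n → Bool) :
    fpow θ (n+1) (Fin.snoc x true) = θ * fpow θ n x := by
  have h := count_le' x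
  simp only [fpow, count_snoc']
  norm_num
  rw [show n + 1 - (count x + 1) = n - count x from by omega]
  ring

lemma fmix_snoc' (K : ℕ) (γ ϑ : Fin K → ℝ) {n : ℕ} (x : Fin n → Bool) :
    fmix K γ ϑ (n+1) (Fin.snoc x false) + fmix K γ ϑ (n+1) (Fin.snoc x true)
      = fmix K γ ϑ n x := by
  simp only [fmix, ← Finset.sum_add_distrib]
  refine Finset.sum_congr rfl fun i _ => ?_
  rw [fpow_snoc_false', fpow_snoc_true']; ring

lemma binom_eq' (θ : ℝ) {n : ℕ} (x : Fin n → Bool) :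
    binom θ n (count x) = (n.choose (count x) : ℝ) * fpow θ n x := by
  simp [binom, fpow, mul_assoc]

lemma gmix_eq' (K : ℕ) (γ ϑ : Fin K → ℝ) {n : ℕ} (x : Fin n → Bool) :
    gmix K γ ϑ n (count x) = (n.choose (count x) : ℝ) * fmix K γ ϑ n x := by
  rw [gmix, fmix, Finset.mul_sum]
  exact Finset.sum_congr rfl fun i _ => by rw [binom_eq']; ring

lemma ufun_eq' {k : ℕ} (hk : 2 ≤ k) (θs : Fin k → ℝ) (lam : Fin k → Fin k → ℝ)
    {n : ℕ} (x : Fin n → Bool) :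
    ufun k θs lam n (count x)
      = (n.choose (count x) : ℝ) *
          ⨅ j : Fin k, ∑ i ∈ Finset.univ.filter (· ≠ j), lam i j * fpow (θs i) n x := by
  have : Nonempty (Fin k) := ⟨⟨0, by omega⟩⟩
  rw [ufun, Real.mul_iInf_of_nonneg (by positivity)]
  congr 1; funext j
  rw [Finset.mul_sum]
  exact Finset.sum_congr rfl fun i _ => by rw [binom_eq']; ring

end AuxStmt14
-- AUX END

section AuxStmt14B

open Finset

/-- `U` divided by the binomial coefficient, as a function on samples. -/
noncomputable def Wx (k : ℕ) (θs : Fin k → ℝ) (lam : Fin k → Fin k → ℝ)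
    (K : ℕ) (γ ϑ : Fin K → ℝ) (N n : ℕ) (x : Fin n → Bool) : ℝ :=
  U k θs lam K γ ϑ N n (count x) / (n.choose (count x) : ℝ)

lemma choose_cast_pos {n : ℕ} (x : Fin n → Bool) :
    (0:ℝ) < (n.choose (count x) : ℝ) := by
  exact_mod_cast Nat.choose_pos (count_le' x)

lemma Wx_at_top {k : ℕ} (hk : 2 ≤ k) (θs : Fin k → ℝ) (lam : Fin k → Fin k → ℝ)
    (K : ℕ) (γ ϑ : Fin K → ℝ) {N n : ℕ} (hn : ¬ n < N) (x : Fin n → Bool) :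
    Wx k θs lam K γ ϑ N n x
      = ⨅ j : Fin k, ∑ i ∈ Finset.univ.filter (· ≠ j), lam i j * fpow (θs i) n x := by
  rw [Wx, U, dif_neg hn, ufun_eq' hk]
  exact mul_div_cancel_left₀ _ (ne_of_gt (choose_cast_pos x))

lemma simp_div_false {n s : ℕ} (hs : s ≤ n) (a : ℝ) :
    a * ((n + 1 - s : ℕ) : ℝ) / (n + 1) / (n.choose s : ℝ)
      = a / ((n+1).choose s : ℝ) := by
  have h := Nat.choose_mul_succ_eq n s
  have hc : (0:ℝ) < (n.choose s : ℝ) := by exact_mod_cast Nat.choose_pos hs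
  have hc' : (0:ℝ) < ((n+1).choose s : ℝ) := by exact_mod_cast Nat.choose_pos (by omega)
  have hcast : (n.choose s : ℝ) * ((n:ℝ) + 1) = ((n+1).choose s : ℝ) * ((n + 1 - s : ℕ) : ℝ) := by
    exact_mod_cast h
  rw [div_div, div_eq_div_iff (by positivity) hc'.ne']
  linear_combination (-a) * hcast

lemma simp_div_true {n s : ℕ} (hs : s ≤ n) (a : ℝ) :
    a * ((s + 1 : ℕ) : ℝ) / (n + 1) / (n.choose s : ℝ)
      = a / ((n+1).choose (s+1) : ℝ) := by
  have h := Nat.add_one_mul_choose_eq n s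
  have hc : (0:ℝ) < (n.choose s : ℝ) := by exact_mod_cast Nat.choose_pos hs
  have hc' : (0:ℝ) < ((n+1).choose (s+1) : ℝ) := by exact_mod_cast Nat.choose_pos (by omega)
  have hcast : ((n:ℝ) + 1) * (n.choose s : ℝ) = ((n+1).choose (s+1) : ℝ) * ((s:ℝ) + 1) := by
    exact_mod_cast h
  rw [div_div, div_eq_div_iff (by positivity) hc'.ne']
  push_cast
  linear_combination (-a) * hcast

lemma Wx_rec {k : ℕ} (hk : 2 ≤ k) (θs : Fin k → ℝ) (lam : Fin k → Fin k → ℝ)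
    (K : ℕ) (γ ϑ : Fin K → ℝ) {N n : ℕ} (hn : n < N) (x : Fin n → Bool) :
    Wx k θs lam K γ ϑ N n x
      = min (⨅ j : Fin k, ∑ i ∈ Finset.univ.filter (· ≠ j), lam i j * fpow (θs i) n x)
          (fmix K γ ϑ n x
            + (Wx k θs lam K γ ϑ N (n+1) (Fin.snoc x false)
              + Wx k θs lam K γ ϑ N (n+1) (Fin.snoc x true))) := by
  have hc := choose_cast_pos x
  have hle := count_le' x
  have hsf : count (Fin.snoc x false) = count x := by simp [count_snoc']
  have hst : count (Fin.snoc x true) = count x + 1 := by simp [count_snoc']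
  rw [Wx, U, dif_pos hn, ← min_div_div_right (le_of_lt hc)]
  congr 1
  · rw [ufun_eq' hk, mul_comm, mul_div_assoc, div_self (ne_of_gt hc), mul_one]
  · rw [add_div, add_div, gmix_eq' K γ ϑ x, mul_comm, mul_div_assoc,
      div_self (ne_of_gt hc), mul_one]
    congr 1
    congr 1
    · rw [simp_div_false hle, Wx, hsf]
    · rw [simp_div_true hle, Wx, hst]

/-- the probability of not having stopped before stage `n` -/
noncomputable def pcont (ψ : ℕ → ℕ → ℝ) (n : ℕ) (x : Fin n → Bool) : ℝ :=
  ∏ m ∈ Finset.range (n - 1), (1 - ψ (m + 1) (prefixCount x (m + 1)))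

lemma sstop_eq_pcont (ψ : ℕ → ℕ → ℝ) (n : ℕ) (x : Fin n → Bool) :
    sstop ψ n x = pcont ψ n x * ψ n (count x) := by
  rw [sstop, pcont, prefixCount_self']

lemma pcont_nonneg {ψ : ℕ → ℕ → ℝ} (hψ : ∀ n s, ψ n s ∈ Set.Icc (0:ℝ) 1)
    (n : ℕ) (x : Fin n → Bool) : 0 ≤ pcont ψ n x :=
  Finset.prod_nonneg fun m _ => by linarith [(hψ (m+1) (prefixCount x (m+1))).2]

lemma pcont_snoc (ψ : ℕ → ℕ → ℝ) {n : ℕ} (hn : 1 ≤ n) (x : Fin n → Bool) (b : Bool) :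
    pcont ψ (n+1) (Fin.snoc x b) = pcont ψ n x * (1 - ψ n (count x)) := by
  unfold pcont
  rw [show n + 1 - 1 = (n-1) + 1 from by omega, Finset.prod_range_succ]
  congr 1
  · exact Finset.prod_congr rfl fun m hm => by
      rw [prefixCount_snoc' _ _ (by simp only [Finset.mem_range] at hm; omega)]
  · rw [show n - 1 + 1 = n from by omega, prefixCount_snoc' _ _ le_rfl, prefixCount_self']

lemma sum_snoc {n : ℕ} (F : (Fin (n+1) → Bool) → ℝ) :
    ∑ y : Fin (n+1) → Bool, F y
      = ∑ x : Fin n → Bool, (F (Fin.snoc x false) + F (Fin.snoc x true)) := by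
  rw [← (Fin.snocEquiv (fun _ => Bool)).sum_comp F, Fintype.sum_prod_type]
  rw [Fintype.sum_bool, ← Finset.sum_add_distrib]
  simp [Fin.snocEquiv, add_comm]

end AuxStmt14B

lemma sum_fin_one (F : (Fin 1 → Bool) → ℝ) :
    ∑ y : Fin 1 → Bool, F y
      = F (Fin.snoc default false) + F (Fin.snoc default true) := by
  have h := sum_snoc (n := 0) F
  rw [Fintype.sum_unique (fun x : Fin 0 → Bool => F (Fin.snoc x false) + F (Fin.snoc x true))] at h
  exact h

/-- **Truncated lower bound (Bernoulli instance of inequality (2-5))**: for every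
sequential test `⟨ψ,φ⟩` based on the sufficient statistic with `ψ ∈ 𝒮^N`,
`L(ψ,φ) ≥ 1 + U_1^N(0) + U_1^N(1)`. -/
theorem stmt14 (k : ℕ) (hk : 2 ≤ k) (θs : Fin k → ℝ)
    (hθ : ∀ i, θs i ∈ Set.Icc (0 : ℝ) 1)
    (lam : Fin k → Fin k → ℝ) (hlam : ∀ i j, 0 ≤ lam i j)
    (K : ℕ) (hK : 1 ≤ K) (γ ϑ : Fin K → ℝ)
    (hγ : ∀ i, 0 ≤ γ i) (hγ1 : ∑ i, γ i = 1)
    (hϑ : ∀ i, ϑ i ∈ Set.Icc (0 : ℝ) 1)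
    (N : ℕ) (hN : 2 ≤ N)
    (ψ : ℕ → ℕ → ℝ) (hψ : ∀ n s, ψ n s ∈ Set.Icc (0 : ℝ) 1)
    (φ : ℕ → ℕ → Fin k → ℝ) (hφ : ∀ n s j, φ n s j ∈ Set.Icc (0 : ℝ) 1)
    (hφsum : ∀ n s, ∑ j, φ n s j = 1)
    (htrunc : TruncatedAt ψ N) :
    1 + U k θs lam K γ ϑ N 1 0 + U k θs lam K γ ϑ N 1 1 ≤
      Lagr k θs lam K γ ϑ N ψ φ := by
  classical
  have hkne : Nonempty (Fin k) := ⟨⟨0, by omega⟩⟩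
  have fmix_nonneg : ∀ (n : ℕ) (x : Fin n → Bool), 0 ≤ fmix K γ ϑ n x := fun n x =>
    Finset.sum_nonneg fun i _ => mul_nonneg (hγ i) (fpow_nonneg' (hϑ i) n x)
  have dlow : ∀ (n : ℕ) (x : Fin n → Bool),
      (⨅ j : Fin k, ∑ i ∈ Finset.univ.filter (· ≠ j), lam i j * fpow (θs i) n x)
        ≤ ∑ j : Fin k, φ n (prefixCount x n) j *
            ∑ i ∈ Finset.univ.filter (· ≠ j), lam i j * fpow (θs i) n x := by
    intro n x
    have hb : BddBelow (Set.range fun j : Fin k =>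
        ∑ i ∈ Finset.univ.filter (· ≠ j), lam i j * fpow (θs i) n x) :=
      (Set.finite_range _).bddBelow
    calc (⨅ j : Fin k, ∑ i ∈ Finset.univ.filter (· ≠ j), lam i j * fpow (θs i) n x)
        = ∑ j : Fin k, φ n (prefixCount x n) j *
            (⨅ j : Fin k, ∑ i ∈ Finset.univ.filter (· ≠ j), lam i j * fpow (θs i) n x) := by
          rw [← Finset.sum_mul, hφsum, one_mul]
      _ ≤ _ := Finset.sum_le_sum fun j _ =>
          mul_le_mul_of_nonneg_left (ciInf_le hb j) (hφ n (prefixCount x n) j).1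
  have WleInf : ∀ (n : ℕ) (x : Fin n → Bool),
      Wx k θs lam K γ ϑ N n x
        ≤ ⨅ j : Fin k, ∑ i ∈ Finset.univ.filter (· ≠ j), lam i j * fpow (θs i) n x := by
    intro n x
    by_cases hn : n < N
    · rw [Wx_rec hk θs lam K γ ϑ hn x]; exact min_le_left _ _
    · rw [Wx_at_top hk θs lam K γ ϑ hn x]
  have key : ∀ d n, n + d = N → 1 ≤ n →
      ∑ x : Fin n → Bool, pcont ψ n x *
          ((n : ℝ) * fmix K γ ϑ n x + Wx k θs lam K γ ϑ N n x)
        ≤ ∑ m ∈ Finset.Icc n N, ∑ x : Fin m → Bool,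
            sstop ψ m x *
              ((m : ℝ) * fmix K γ ϑ m x +
                ∑ j : Fin k, φ m (prefixCount x m) j *
                  ∑ i ∈ Finset.univ.filter (· ≠ j), lam i j * fpow (θs i) m x) := by
    intro d
    induction d with
    | zero =>
      intro n hdn h1
      have hnN : n = N := by omega
      subst hnN
      obtain ⟨M, rfl⟩ : ∃ M, n = M + 1 := ⟨n - 1, by omega⟩
      rw [Finset.Icc_self, Finset.sum_singleton]
      apply Finset.sum_le_sum
      intro x _
      have hfull := htrunc x
      rw [Finset.prod_range_succ] at hfull
      have hpc : pcont ψ (M+1) x * (1 - ψ (M+1) (count x)) = 0 := by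
        rw [pcont, Nat.add_sub_cancel, ← prefixCount_self']
        exact hfull
      have h3 : pcont ψ (M+1) x = pcont ψ (M+1) x * ψ (M+1) (count x) := by
        linear_combination hpc
      have hW := Wx_at_top hk θs lam K γ ϑ (lt_irrefl (M+1)) x
      have hA : (((M+1:ℕ)) : ℝ) * fmix K γ ϑ (M+1) x + Wx k θs lam K γ ϑ (M+1) (M+1) x
          ≤ ((M+1:ℕ) : ℝ) * fmix K γ ϑ (M+1) x +
            ∑ j : Fin k, φ (M+1) (prefixCount x (M+1)) j *
              ∑ i ∈ Finset.univ.filter (· ≠ j), lam i j * fpow (θs i) (M+1) x := by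
        have := dlow (M+1) x
        rw [hW]
        linarith
      rw [sstop_eq_pcont]
      conv_lhs => rw [h3]
      exact mul_le_mul_of_nonneg_left hA
        (mul_nonneg (pcont_nonneg hψ (M+1) x) (hψ (M+1) (count x)).1)
    | succ d ih =>
      intro n hdn h1
      have hnN : n < N := by omega
      have ihn := ih (n+1) (by omega) (by omega)
      have hIcc : Finset.Icc n N = insert n (Finset.Icc (n+1) N) := by
        ext m; simp only [Finset.mem_Icc, Finset.mem_insert]; omega
      rw [hIcc, Finset.sum_insert (by simp)]
      have head : ∀ x : Fin n → Bool,
          pcont ψ n x * ψ n (count x) *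
              ((n : ℝ) * fmix K γ ϑ n x + Wx k θs lam K γ ϑ N n x)
            ≤ sstop ψ n x *
              ((n : ℝ) * fmix K γ ϑ n x +
                ∑ j : Fin k, φ n (prefixCount x n) j *
                  ∑ i ∈ Finset.univ.filter (· ≠ j), lam i j * fpow (θs i) n x) := by
        intro x
        rw [sstop_eq_pcont]
        refine mul_le_mul_of_nonneg_left ?_
          (mul_nonneg (pcont_nonneg hψ n x) (hψ n (count x)).1)
        have h4 := WleInf n x
        have h5 := dlow n x
        linarith
      have tail : ∑ x : Fin n → Bool,
          pcont ψ n x * (1 - ψ n (count x)) *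
              ((n : ℝ) * fmix K γ ϑ n x + Wx k θs lam K γ ϑ N n x)
          ≤ ∑ m ∈ Finset.Icc (n+1) N, ∑ x : Fin m → Bool,
              sstop ψ m x *
                ((m : ℝ) * fmix K γ ϑ m x +
                  ∑ j : Fin k, φ m (prefixCount x m) j *
                    ∑ i ∈ Finset.univ.filter (· ≠ j), lam i j * fpow (θs i) m x) := by
        refine le_trans ?_ ihn
        rw [sum_snoc (fun y : Fin (n+1) → Bool => pcont ψ (n+1) y *
          (((n+1 : ℕ) : ℝ) * fmix K γ ϑ (n+1) y + Wx k θs lam K γ ϑ N (n+1) y))]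
        apply Finset.sum_le_sum
        intro x _
        rw [pcont_snoc ψ h1 x false, pcont_snoc ψ h1 x true]
        have hps : 0 ≤ pcont ψ n x * (1 - ψ n (count x)) :=
          mul_nonneg (pcont_nonneg hψ n x) (by linarith [(hψ n (count x)).2])
        have hfs := fmix_snoc' K γ ϑ x
        have h2 : Wx k θs lam K γ ϑ N n x
            ≤ fmix K γ ϑ n x +
              (Wx k θs lam K γ ϑ N (n+1) (Fin.snoc x false)
                + Wx k θs lam K γ ϑ N (n+1) (Fin.snoc x true)) := by
          rw [Wx_rec hk θs lam K γ ϑ hnN x]; exact min_le_right _ _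
        have hsum : (((n+1 : ℕ)) : ℝ) * fmix K γ ϑ (n+1) (Fin.snoc x false)
              + Wx k θs lam K γ ϑ N (n+1) (Fin.snoc x false)
              + ((((n+1 : ℕ)) : ℝ) * fmix K γ ϑ (n+1) (Fin.snoc x true)
                + Wx k θs lam K γ ϑ N (n+1) (Fin.snoc x true))
            = (((n+1 : ℕ)) : ℝ) * fmix K γ ϑ n x
              + (Wx k θs lam K γ ϑ N (n+1) (Fin.snoc x false)
                + Wx k θs lam K γ ϑ N (n+1) (Fin.snoc x true)) := by
          rw [← hfs]; ring
        have hinner : (n : ℝ) * fmix K γ ϑ n x + Wx k θs lam K γ ϑ N n x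
            ≤ (((n+1 : ℕ)) : ℝ) * fmix K γ ϑ (n+1) (Fin.snoc x false)
              + Wx k θs lam K γ ϑ N (n+1) (Fin.snoc x false)
              + ((((n+1 : ℕ)) : ℝ) * fmix K γ ϑ (n+1) (Fin.snoc x true)
                + Wx k θs lam K γ ϑ N (n+1) (Fin.snoc x true)) := by
          rw [hsum]
          push_cast
          have := fmix_nonneg n x
          linarith
        calc pcont ψ n x * (1 - ψ n (count x)) *
              ((n : ℝ) * fmix K γ ϑ n x + Wx k θs lam K γ ϑ N n x)
            ≤ pcont ψ n x * (1 - ψ n (count x)) *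
              ((((n+1 : ℕ)) : ℝ) * fmix K γ ϑ (n+1) (Fin.snoc x false)
                + Wx k θs lam K γ ϑ N (n+1) (Fin.snoc x false)
                + ((((n+1 : ℕ)) : ℝ) * fmix K γ ϑ (n+1) (Fin.snoc x true)
                  + Wx k θs lam K γ ϑ N (n+1) (Fin.snoc x true))) :=
              mul_le_mul_of_nonneg_left hinner hps
          _ = _ := by ring
      calc ∑ x : Fin n → Bool, pcont ψ n x *
              ((n : ℝ) * fmix K γ ϑ n x + Wx k θs lam K γ ϑ N n x)
          = ∑ x : Fin n → Bool,
              (pcont ψ n x * ψ n (count x) *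
                  ((n : ℝ) * fmix K γ ϑ n x + Wx k θs lam K γ ϑ N n x)
                + pcont ψ n x * (1 - ψ n (count x)) *
                  ((n : ℝ) * fmix K γ ϑ n x + Wx k θs lam K γ ϑ N n x)) :=
            Finset.sum_congr rfl fun x _ => by ring
        _ = _ + _ := Finset.sum_add_distrib
        _ ≤ _ := add_le_add (Finset.sum_le_sum fun x _ => head x) tail
  have hkey := key (N - 1) 1 (by omega) le_rfl
  unfold Lagr
  refine le_trans ?_ hkey
  have hc0 : count (default : Fin 0 → Bool) = 0 := by decide
  have hcf : count (Fin.snoc (default : Fin 0 → Bool) false) = 0 := by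
    rw [count_snoc', hc0]; norm_num
  have hct : count (Fin.snoc (default : Fin 0 → Bool) true) = 1 := by
    rw [count_snoc', hc0]; norm_num
  have hpc1 : ∀ y : Fin 1 → Bool, pcont ψ 1 y = 1 := by
    intro y; simp [pcont]
  have hfm : ∀ θ : ℝ, θ ∈ Set.Icc (0:ℝ) 1 →
      fpow θ 1 (Fin.snoc (default : Fin 0 → Bool) false)
        + fpow θ 1 (Fin.snoc (default : Fin 0 → Bool) true) = 1 := by
    intro θ _
    have h0 : fpow θ 0 (default : Fin 0 → Bool) = 1 := by
      rw [fpow, hc0]; norm_num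
    rw [fpow_snoc_false', fpow_snoc_true', h0]; ring
  have hfmix : fmix K γ ϑ 1 (Fin.snoc (default : Fin 0 → Bool) false)
      + fmix K γ ϑ 1 (Fin.snoc (default : Fin 0 → Bool) true) = 1 := by
    rw [fmix, fmix, ← Finset.sum_add_distrib, ← hγ1]
    refine Finset.sum_congr rfl fun i _ => ?_
    rw [← mul_add, hfm (ϑ i) (hϑ i), mul_one]
  have hWf : Wx k θs lam K γ ϑ N 1 (Fin.snoc (default : Fin 0 → Bool) false)
      = U k θs lam K γ ϑ N 1 0 := by
    rw [Wx, hcf]; simp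
  have hWt : Wx k θs lam K γ ϑ N 1 (Fin.snoc (default : Fin 0 → Bool) true)
      = U k θs lam K γ ϑ N 1 1 := by
    rw [Wx, hct]; simp
  rw [sum_fin_one]
  simp only [hpc1, hWf, hWt, Nat.cast_one, one_mul]
  linarith [hfmix]
end
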